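/- There exists an absolute constant C > 0 with the following property: for all intervals I, J of the real line, every θ > 0, and every g ∈ C²(R) such that g''(x) ≥ θ for all x ∈ J, one has #{x ∈ J ∩ Z : g(x) ∈ I} ≤ C ( |I|^{1/2} / θ^{1/2} + 1 ), where |I| denotes the length of I. -/

import Mathlib

open Set
open scoped ENNReal

set_option maxHeartbeats 1000000

/-- second-order counting lemma: there is an absolute constant
`C > 0` such that for all intervals `I, J ⊆ ℝ`, every `θ > 0` and every
`g ∈ C²(ℝ)` with `g'' ≥ θ` on `J`, the number of integers `x ∈ J` with `g x ∈ I`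
is at most `C (|I|^{1/2} / θ^{1/2} + 1)`.  The cardinality is taken in
`ℕ∞ ⊆ ℝ≥0∞` and `|I|` is the (extended) diameter of `I`. -/
theorem counting_lemma_second_order :
    ∃ C : ℝ, 0 < C ∧
      ∀ (I J : Set ℝ), I.OrdConnected → J.OrdConnected →
      ∀ θ : ℝ, 0 < θ →
      ∀ g : ℝ → ℝ, ContDiff ℝ 2 g →
        (∀ x ∈ J, θ ≤ deriv (deriv g) x) →
        (Set.encard {x : ℤ | (x : ℝ) ∈ J ∧ g x ∈ I} : ℝ≥0∞) ≤
          ENNReal.ofReal C *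
            ((EMetric.diam I) ^ ((1:ℝ)/2) / ENNReal.ofReal (θ ^ ((1:ℝ)/2)) + 1) := by
  refine ⟨3, by norm_num, ?_⟩
  intro I J hI hJ θ hθ g hg hg''
  set T : Set ℤ := {x : ℤ | (x : ℝ) ∈ J ∧ g x ∈ I} with hTdef
  by_cases hD : EMetric.diam I = ⊤
  · have h1 : (EMetric.diam I) ^ ((1:ℝ)/2) / ENNReal.ofReal (θ ^ ((1:ℝ)/2)) = ⊤ := by
      rw [hD, ENNReal.top_rpow_of_pos (by norm_num)]
      exact ENNReal.top_div_of_ne_top ENNReal.ofReal_ne_top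
    rw [h1]
    rw [show (⊤ : ℝ≥0∞) + 1 = ⊤ from by simp]
    rw [ENNReal.mul_top (by simp)]
    exact le_top
  -- main case
  set Dr : ℝ := (EMetric.diam I).toReal with hDrdef
  have hDr0 : 0 ≤ Dr := ENNReal.toReal_nonneg
  have hdist : ∀ y z : ℝ, y ∈ I → z ∈ I → |y - z| ≤ Dr := by
    intro y z hy hz
    have h := EMetric.edist_le_diam_of_mem hy hz
    rw [edist_dist] at h
    have := ENNReal.toReal_mono hD h
    rwa [ENNReal.toReal_ofReal dist_nonneg, Real.dist_eq] at this
  -- convexity of the perturbed function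
  have hJc : Convex ℝ J := convex_iff_ordConnected.mpr hJ
  have hgd : Differentiable ℝ g := hg.differentiable (by norm_num)
  have hg1 : ContDiff ℝ 1 (deriv g) := by
    have h2 : (2 : WithTop ℕ∞) = 1 + 1 := by norm_num
    exact (contDiff_succ_iff_deriv.mp (h2 ▸ hg)).2.2
  have hgd' : Differentiable ℝ (deriv g) := hg1.differentiable (by norm_num)
  have hderiv : deriv (fun x => g x - θ/2 * x^2) = fun x => deriv g x - θ * x := by
    funext x
    rw [deriv_fun_sub (hgd x) (by fun_prop)]
    congr 1
    rw [deriv_const_mul _ (by fun_prop), deriv_pow_field]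
    ring
  have hconv : ConvexOn ℝ J (fun x => g x - θ/2 * x^2) := by
    apply convexOn_of_deriv2_nonneg hJc
    · exact (hgd.continuous.sub (by fun_prop)).continuousOn
    · exact (hgd.sub (by fun_prop)).differentiableOn
    · rw [hderiv]; exact (hgd'.sub (by fun_prop)).differentiableOn
    · intro x hx
      have h2 : deriv^[2] (fun x => g x - θ/2 * x^2) x
          = deriv (deriv (fun x => g x - θ/2 * x^2)) x := rfl
      rw [h2, hderiv]
      have h3 : deriv (fun x => deriv g x - θ * x) x = deriv (deriv g) x - θ := by
        rw [deriv_fun_sub (hgd' x) (by fun_prop)]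
        have : deriv (fun y : ℝ => θ * y) x = θ := by
          simpa using ((hasDerivAt_id x).const_mul θ).deriv
        rw [this]
      rw [h3]
      have := hg'' x (interior_subset hx)
      linarith
  -- key triple inequality
  have key : ∀ a b c : ℤ, a ∈ T → b ∈ T → c ∈ T → a < b → b < c →
      θ * (((b:ℝ) - a) * ((c:ℝ) - b)) ≤ 2 * Dr := by
    intro a b c ha hb hc hab hbc
    have hab' : (a:ℝ) < b := by exact_mod_cast hab
    have hbc' : (b:ℝ) < c := by exact_mod_cast hbc
    have hp : (0:ℝ) < (b:ℝ) - a := by linarith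
    have hq : (0:ℝ) < (c:ℝ) - b := by linarith
    have hca : (0:ℝ) < (c:ℝ) - a := by linarith
    have hs := hconv.slope_mono_adjacent ha.1 hc.1 hab' hbc'
    have hcross := (div_le_div_iff₀ hp hq).mp hs
    have hu := abs_le.mp (hdist _ _ hb.2 ha.2)
    have hv := abs_le.mp (hdist _ _ hc.2 hb.2)
    -- first: θ * (p*q) * (c-a) ≤ 2*Dr*(c-a)
    have h1 : θ * (((b:ℝ) - a) * ((c:ℝ) - b)) * ((c:ℝ) - a) ≤ 2 * Dr * ((c:ℝ) - a) := by
      nlinarith [mul_le_mul_of_nonneg_left hv.2 hp.le,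
        mul_le_mul_of_nonneg_left hu.1 hq.le, hcross]
    exact le_of_mul_le_mul_right h1 hca
  -- finiteness
  have hfin : T.Finite := by
    by_cases h2 : ∃ a ∈ T, ∃ b ∈ T, a < b
    · obtain ⟨a, ha, b, hb, hab⟩ := h2
      have hKθ : θ * (2 * Dr / θ) = 2 * Dr := by field_simp
      apply (Set.finite_Icc (a - (⌈2 * Dr / θ⌉ + 1)) (b + (⌈2 * Dr / θ⌉ + 1))).subset
      intro c hc
      have hK0 : (0:ℝ) ≤ 2 * Dr / θ := by positivity
      have hceil : (2 * Dr / θ : ℝ) ≤ (⌈2 * Dr / θ⌉ : ℝ) := Int.le_ceil _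
      have hceil0 : (0:ℤ) ≤ ⌈2 * Dr / θ⌉ := Int.ceil_nonneg hK0
      constructor
      · by_contra hlt
        push_neg at hlt
        have hca : c < a := by omega
        have hk := key c a b hc ha hb hca hab
        have h1 : ((⌈2 * Dr / θ⌉ : ℝ) + 1) ≤ (a:ℝ) - c := by
          have : a - c ≥ ⌈2 * Dr / θ⌉ + 1 := by omega
          exact_mod_cast this
        have h2 : (1:ℝ) ≤ (b:ℝ) - a := by exact_mod_cast (by omega : (1:ℤ) ≤ b - a)
        have h3 : 2 * Dr / θ + 1 ≤ (a:ℝ) - c := by linarith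
        have h4 := mul_le_mul_of_nonneg_left h3 hθ.le
        have e1 : (0:ℝ) < (a:ℝ) - c := by linarith
        have h5 := mul_le_mul_of_nonneg_left h2 (mul_pos hθ e1).le
        nlinarith [hKθ, hθ]
      · by_contra hlt
        push_neg at hlt
        have hbc : b < c := by omega
        have hk := key a b c ha hb hc hab hbc
        have h1 : ((⌈2 * Dr / θ⌉ : ℝ) + 1) ≤ (c:ℝ) - b := by
          have : c - b ≥ ⌈2 * Dr / θ⌉ + 1 := by omega
          exact_mod_cast this
        have h2 : (1:ℝ) ≤ (b:ℝ) - a := by exact_mod_cast (by omega : (1:ℤ) ≤ b - a)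
        have h3 : 2 * Dr / θ + 1 ≤ (c:ℝ) - b := by linarith
        have h4 := mul_le_mul_of_nonneg_left h3 hθ.le
        have e1 : (0:ℝ) < (c:ℝ) - b := by linarith
        have h5 := mul_le_mul_of_nonneg_left h2 (mul_pos hθ e1).le
        nlinarith [hKθ, hθ]
    · apply Set.Subsingleton.finite
      intro x hx y hy
      by_contra hne
      rcases lt_or_gt_of_ne hne with h | h
      · exact h2 ⟨x, hx, y, hy, h⟩
      · exact h2 ⟨y, hy, x, hx, h⟩
  -- counting
  set F : Finset ℤ := hfin.toFinset with hF
  have hreal : (F.card : ℝ) ≤ 3 * (Real.sqrt Dr / Real.sqrt θ + 1) := by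
    have hsθ0 : 0 < Real.sqrt θ := Real.sqrt_pos.mpr hθ
    have hfr0 : 0 ≤ Real.sqrt Dr / Real.sqrt θ := by positivity
    rcases le_or_gt F.card 2 with hn | hn
    · have : (F.card : ℝ) ≤ 2 := by exact_mod_cast hn
      linarith
    · set n := F.card with hndef
      have hne : F.Nonempty := Finset.card_pos.mp (by omega)
      set a := F.min' hne with ha
      set c := F.max' hne with hc
      set t : ℤ := ((n:ℤ) - 1) / 2 with ht
      have ht1 : 1 ≤ t := by omega
      have ht2 : 2 * t ≤ (n:ℤ) - 1 := by omega
      have ht3 : (n:ℤ) - 2 ≤ 2 * t := by omega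
      have hA : (F.filter (fun x => x < a + t)).card ≤ t.toNat := by
        have hsub : F.filter (fun x => x < a + t) ⊆ Finset.Ico a (a + t) := by
          intro x hx
          rw [Finset.mem_filter] at hx
          exact Finset.mem_Ico.mpr ⟨F.min'_le x hx.1, hx.2⟩
        calc (F.filter (fun x => x < a + t)).card ≤ (Finset.Ico a (a + t)).card :=
              Finset.card_le_card hsub
          _ = t.toNat := by rw [Int.card_Ico]; congr 1; omega
      have hB : (F.filter (fun x => c - t < x)).card ≤ t.toNat := by
        have hsub : F.filter (fun x => c - t < x) ⊆ Finset.Ioc (c - t) c := by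
          intro x hx
          rw [Finset.mem_filter] at hx
          exact Finset.mem_Ioc.mpr ⟨hx.2, F.le_max' x hx.1⟩
        calc (F.filter (fun x => c - t < x)).card ≤ (Finset.Ioc (c - t) c).card :=
              Finset.card_le_card hsub
          _ = t.toNat := by rw [Int.card_Ioc]; congr 1; omega
      have hbex : ∃ b ∈ F, ¬(b < a + t) ∧ ¬(c - t < b) := by
        by_contra hcon
        push_neg at hcon
        have hsub : F ⊆ (F.filter (fun x => x < a + t)) ∪ (F.filter (fun x => c - t < x)) := by
          intro x hx
          rcases lt_or_ge x (a + t) with h | h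
          · exact Finset.mem_union_left _ (Finset.mem_filter.mpr ⟨hx, h⟩)
          · exact Finset.mem_union_right _ (Finset.mem_filter.mpr ⟨hx, hcon x hx h⟩)
        have := (Finset.card_le_card hsub).trans (Finset.card_union_le _ _)
        have htn : (t.toNat : ℤ) = t := Int.toNat_of_nonneg (by omega)
        omega
      obtain ⟨b, hbF, hb1, hb2⟩ := hbex
      push_neg at hb1 hb2
      have hab : a < b := by omega
      have hbc : b < c := by omega
      have memT : ∀ x ∈ F, x ∈ T := fun x hx => hfin.mem_toFinset.mp hx
      have hk := key a b c (memT a (F.min'_mem hne)) (memT b hbF) (memT c (F.max'_mem hne)) hab hbc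
      have h1 : (t:ℝ) ≤ (b:ℝ) - a := by exact_mod_cast (by omega : (t:ℤ) ≤ b - a)
      have h2 : (t:ℝ) ≤ (c:ℝ) - b := by exact_mod_cast (by omega : (t:ℤ) ≤ c - b)
      have ht0 : (0:ℝ) < t := by exact_mod_cast ht1
      clear_value t a c
      clear_value n F
      have hkt : θ * ((t:ℝ) * t) ≤ 2 * Dr := by
        refine le_trans ?_ hk
        have := mul_le_mul h1 h2 ht0.le (by linarith)
        nlinarith
      have hn2 : ((n:ℝ) - 2) ≤ 2 * (t:ℝ) := by exact_mod_cast ht3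
      have hsD : Real.sqrt Dr ^ 2 = Dr := Real.sq_sqrt hDr0
      have hsθ : Real.sqrt θ ^ 2 = θ := Real.sq_sqrt hθ.le
      have hfrac : ((n:ℝ) - 2) ≤ 3 * (Real.sqrt Dr / Real.sqrt θ) := by
        rw [mul_div_assoc' 3 _ _, le_div_iff₀ hsθ0]
        have hn2' : (0:ℝ) ≤ (n:ℝ) - 2 := by
          have : (3:ℝ) ≤ n := by exact_mod_cast hn
          linarith
        have hq1 : ((n:ℝ) - 2)^2 ≤ 4 * ((t:ℝ) * t) := by nlinarith [hn2, hn2', ht0]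
        have hq2 : θ * ((n:ℝ) - 2)^2 ≤ 8 * Dr := by
          nlinarith [mul_le_mul_of_nonneg_left hq1 hθ.le, hkt]
        have hX0 : 0 ≤ ((n:ℝ) - 2) * Real.sqrt θ := mul_nonneg hn2' hsθ0.le
        have hsq : (((n:ℝ) - 2) * Real.sqrt θ)^2 ≤ (3 * Real.sqrt Dr)^2 := by
          nlinarith [hq2, hsθ, hsD, hDr0]
        have hfin2 := Real.sqrt_le_sqrt hsq
        rwa [Real.sqrt_sq hX0, Real.sqrt_sq (by positivity)] at hfin2
      linarith
  -- transfer to ℝ≥0∞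
  have hTF : T = ↑F := hfin.coe_toFinset.symm
  rw [hTF, Set.encard_coe_eq_coe_finsetCard]
  rw [ENat.toENNReal_coe]
  have hrw : (EMetric.diam I) ^ ((1:ℝ)/2) = ENNReal.ofReal (Dr ^ ((1:ℝ)/2)) := by
    conv_lhs => rw [← ENNReal.ofReal_toReal hD]
    rw [← ENNReal.ofReal_rpow_of_nonneg hDr0 (by norm_num)]
  rw [hrw, ← ENNReal.ofReal_div_of_pos (Real.rpow_pos_of_pos hθ _)]
  rw [← ENNReal.ofReal_one, ← ENNReal.ofReal_add (by positivity) (by norm_num),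
    ← ENNReal.ofReal_mul (by norm_num)]
  rw [show ((F.card : ℕ) : ℝ≥0∞) = ENNReal.ofReal (F.card) from (ENNReal.ofReal_natCast _).symm]
  apply ENNReal.ofReal_le_ofReal
  rw [← Real.sqrt_eq_rpow, ← Real.sqrt_eq_rpow]
  exact hreal
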